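/- arXiv:1705.05950 — 3 statements merged into one kernel-verified Lean document; each statement's English description precedes it below -/
import Mathlib

section
/- Let X be a probability space, ρ : X → ℝ nonnegative, bounded, measurable, and I an indicator of a measurable set with 0 < E[I] < 1. Then the objective L(I) = E[Iρ]/E[I] + E[(1−I)ρ]/(1−E[I]) satisfies L(I) ≤ ess sup ρ + E[ρ]. -/
open MeasureTheory

/-- The objective `L(I) = E[Iρ]/E[I] + E[(1−I)ρ]/(1−E[I])` is bounded above by
`ess sup ρ + E[ρ]` for any indicator `I` with `0 < E[I] < 1`. -/
theorem objective_le_essSup_add_mean {X : Type*} [MeasurableSpace X] (μ : Measure X)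
    [IsProbabilityMeasure μ] (ρ : X → ℝ) (hρm : Measurable ρ) (hρ0 : ∀ x, 0 ≤ ρ x)
    (C : ℝ) (hbdd : ∀ x, ρ x ≤ C)
    (A : Set X) (hA : MeasurableSet A)
    (I : X → ℝ) (hI : I = A.indicator (fun _ => (1 : ℝ)))
    (h0 : 0 < ∫ x, I x ∂μ) (h1 : ∫ x, I x ∂μ < 1) :
    (∫ x, I x * ρ x ∂μ) / (∫ x, I x ∂μ) +
      (∫ x, (1 - I x) * ρ x ∂μ) / (1 - ∫ x, I x ∂μ) ≤
    essSup ρ μ + ∫ x, ρ x ∂μ := by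
  set M := essSup ρ μ with hMdef
  have hbd : Filter.IsBoundedUnder (· ≤ ·) (ae μ) ρ :=
    Filter.isBoundedUnder_of ⟨C, hbdd⟩
  have hρae : ∀ᵐ x ∂μ, ρ x ≤ M := ae_le_essSup hbd
  have hint : Integrable ρ μ := by
    apply Integrable.mono' (integrable_const C) hρm.aestronglyMeasurable
    filter_upwards with x
    rw [Real.norm_eq_abs, abs_of_nonneg (hρ0 x)]
    exact hbdd x
  have hIρ : ∀ x, I x * ρ x = A.indicator ρ x := by
    intro x; rw [hI]
    by_cases hx : x ∈ A <;> simp [hx]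
  have h1Iρ : ∀ x, (1 - I x) * ρ x = Aᶜ.indicator ρ x := by
    intro x; rw [hI]
    by_cases hx : x ∈ A <;> simp [hx]
  have hp : ∫ x, I x ∂μ = (μ A).toReal := by
    rw [hI, integral_indicator hA]; simp [Measure.real]
  have ha' : ∫ x, I x * ρ x ∂μ = ∫ x in A, ρ x ∂μ := by
    simp_rw [hIρ]; exact integral_indicator hA
  have hb' : ∫ x, (1 - I x) * ρ x ∂μ = ∫ x in Aᶜ, ρ x ∂μ := by
    simp_rw [h1Iρ]; exact integral_indicator hA.compl
  have hcompl : (μ Aᶜ).toReal = 1 - (μ A).toReal := by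
    rw [measure_compl hA (measure_ne_top μ A), measure_univ,
      ENNReal.toReal_sub_of_le prob_le_one ENNReal.one_ne_top]
    simp
  have haM : ∫ x in A, ρ x ∂μ ≤ (μ A).toReal * M := by
    calc ∫ x in A, ρ x ∂μ ≤ ∫ _x in A, M ∂μ :=
          integral_mono_ae hint.restrict (integrable_const M) (ae_restrict_of_ae hρae)
      _ = (μ A).toReal * M := by rw [setIntegral_const]; simp [smul_eq_mul, Measure.real]
  have hbM : ∫ x in Aᶜ, ρ x ∂μ ≤ (1 - (μ A).toReal) * M := by
    calc ∫ x in Aᶜ, ρ x ∂μ ≤ ∫ _x in Aᶜ, M ∂μ :=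
          integral_mono_ae hint.restrict (integrable_const M) (ae_restrict_of_ae hρae)
      _ = (1 - (μ A).toReal) * M := by rw [setIntegral_const, Measure.real, hcompl]; simp [smul_eq_mul]
  have hintA : Integrable (fun x => I x * ρ x) μ := by
    simp_rw [hIρ]; exact hint.indicator hA
  have hintB : Integrable (fun x => (1 - I x) * ρ x) μ := by
    simp_rw [h1Iρ]; exact hint.indicator hA.compl
  have hsum : (∫ x, I x * ρ x ∂μ) + (∫ x, (1 - I x) * ρ x ∂μ) = ∫ x, ρ x ∂μ := by
    rw [← integral_add hintA hintB]
    congr 1; funext x; ring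
  set p := ∫ x, I x ∂μ with hpdef
  set a := ∫ x, I x * ρ x ∂μ with hadef
  set b := ∫ x, (1 - I x) * ρ x ∂μ with hbdef
  have ha2 : a ≤ p * M := by rw [ha', hp]; exact haM
  have hb2 : b ≤ (1 - p) * M := by rw [hb', hp]; exact hbM
  have hp1 : (0:ℝ) < 1 - p := by linarith
  rw [← hsum, div_add_div _ _ h0.ne' hp1.ne', div_le_iff₀ (by positivity)]
  nlinarith [mul_le_mul_of_nonneg_right ha2 (sq_nonneg (1 - p)),
    mul_le_mul_of_nonneg_right hb2 (sq_nonneg p), sq_nonneg p, sq_nonneg (1 - p)]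
end

section
/- Let d : Ω × Ω → ℝ be symmetric with zero diagonal on a finite set Ω of n points. Then there exists h ≥ 0 and points f'_p ∈ ℝ^{n} such that ‖f'_p − f'_q‖² = d(p,q)² + h²·[p ≠ q] for all p, q (i.e., adding a sufficiently large constant to squared off-diagonal entries makes the matrix Euclidean). -/
/-- Any symmetric dissimilarity with zero diagonal becomes a Euclidean squared-distance
matrix after adding a large enough constant `h²` to the squared off-diagonal entries:
there exist `h ≥ 0` and an embedding `f'` into `ℝⁿ` with
`‖f'_p − f'_q‖² = d(p,q)² + h²·[p ≠ q]`. -/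
theorem euclidean_embedding_of_symmetric_dissimilarity
    {Ω : Type*} [Fintype Ω] [DecidableEq Ω]
    (d : Ω → Ω → ℝ) (hsymm : ∀ p q, d p q = d q p) (hdiag : ∀ p, d p p = 0) :
    ∃ h : ℝ, 0 ≤ h ∧ ∃ f' : Ω → EuclideanSpace ℝ (Fin (Fintype.card Ω)),
      ∀ p q, ‖f' p - f' q‖ ^ 2 = d p q ^ 2 + h ^ 2 * (if p ≠ q then 1 else 0) := by
  classical
  set D : Ω → Ω → ℝ := fun p q => d p q ^ 2 with hD
  have hDnn : ∀ p q, 0 ≤ D p q := fun p q => sq_nonneg _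
  have hDsymm : ∀ p q, D p q = D q p := fun p q => by simp [hD, hsymm p q]
  set c : ℝ := ∑ p : Ω, ∑ q : Ω, D p q with hc
  have hcnn : 0 ≤ c := Finset.sum_nonneg fun p _ =>
    Finset.sum_nonneg fun q _ => hDnn p q
  -- row sums are at most c
  have hrow : ∀ p : Ω, (∑ q : Ω, D p q) ≤ c := by
    intro p
    exact Finset.single_le_sum (f := fun p => ∑ q : Ω, D p q)
      (fun i _ => Finset.sum_nonneg fun q _ => hDnn i q) (Finset.mem_univ p)
  set A : Matrix Ω Ω ℝ := fun p q => (if p = q then c else 0) - (1/2) * D p q with hA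
  have hApsd : A.PosSemidef := by
    rw [Matrix.posSemidef_iff_dotProduct_mulVec]
    constructor
    · ext p q
      simp [hA, Matrix.conjTranspose, Matrix.transpose, hDsymm p q, eq_comm]
    · intro x
      have key : (∑ p : Ω, ∑ q : Ω, D p q * (x p * x q))
          ≤ ∑ p : Ω, ∑ q : Ω, D p q * x p ^ 2 := by
        have h1 : (∑ p : Ω, ∑ q : Ω, D p q * (x p * x q))
            ≤ ∑ p : Ω, ∑ q : Ω, D p q * ((x p ^ 2 + x q ^ 2) / 2) := by
          refine Finset.sum_le_sum fun p _ => Finset.sum_le_sum fun q _ => ?_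
          have : x p * x q ≤ (x p ^ 2 + x q ^ 2) / 2 := by nlinarith [sq_nonneg (x p - x q)]
          exact mul_le_mul_of_nonneg_left this (hDnn p q)
        have h2 : (∑ p : Ω, ∑ q : Ω, D p q * x q ^ 2)
            = ∑ p : Ω, ∑ q : Ω, D p q * x p ^ 2 := by
          rw [Finset.sum_comm]
          refine Finset.sum_congr rfl fun p _ => Finset.sum_congr rfl fun q _ => ?_
          rw [hDsymm p q]
        calc (∑ p : Ω, ∑ q : Ω, D p q * (x p * x q))
            ≤ ∑ p : Ω, ∑ q : Ω, D p q * ((x p ^ 2 + x q ^ 2) / 2) := h1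
          _ = ((∑ p : Ω, ∑ q : Ω, D p q * x p ^ 2) + ∑ p : Ω, ∑ q : Ω, D p q * x q ^ 2) / 2 := by
              simp only [Finset.sum_div, ← Finset.sum_add_distrib]
              refine Finset.sum_congr rfl fun p _ => Finset.sum_congr rfl fun q _ => ?_
              ring
          _ = ∑ p : Ω, ∑ q : Ω, D p q * x p ^ 2 := by rw [h2]; ring
      have hquad : dotProduct (star x) (Matrix.mulVec A x)
          = c * ∑ p : Ω, x p ^ 2 - (1/2) * ∑ p : Ω, ∑ q : Ω, D p q * (x p * x q) := by
        simp only [dotProduct, Matrix.mulVec, hA, Pi.star_apply,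
          star_trivial, sub_mul, ite_mul, zero_mul, Finset.sum_sub_distrib,
          Finset.mul_sum, Finset.sum_ite_eq, Finset.mem_univ, if_true]
        rw [← Finset.sum_sub_distrib]
        refine Finset.sum_congr rfl fun p _ => ?_
        rw [mul_sub, Finset.mul_sum]
        congr 1
        · ring
        · exact Finset.sum_congr rfl fun q _ => by ring
      rw [hquad]
      have hbound : (1/2) * ∑ p : Ω, ∑ q : Ω, D p q * (x p * x q)
          ≤ (1/2) * ∑ p : Ω, ∑ q : Ω, D p q * x p ^ 2 := by linarith
      have hfin : (∑ p : Ω, ∑ q : Ω, D p q * x p ^ 2) ≤ ∑ p : Ω, 2 * c * x p ^ 2 := by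
        refine Finset.sum_le_sum fun p _ => ?_
        rw [← Finset.sum_mul]
        have : (∑ q : Ω, D p q) ≤ 2 * c := le_trans (hrow p) (by linarith)
        exact mul_le_mul_of_nonneg_right this (sq_nonneg _)
      have e1 : (∑ p : Ω, 2 * c * x p ^ 2) = 2 * c * ∑ p : Ω, x p ^ 2 :=
        (Finset.mul_sum Finset.univ (fun p => x p ^ 2) (2 * c)).symm
      have hx2 : (0:ℝ) ≤ ∑ p : Ω, x p ^ 2 := Finset.sum_nonneg fun p _ => sq_nonneg _
      nlinarith [key, hfin, e1]
  obtain ⟨B, hB⟩ : ∃ B : Matrix Ω Ω ℝ, A = Matrix.conjTranspose B * B := by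
    open scoped MatrixOrder in
    exact CStarAlgebra.nonneg_iff_eq_star_mul_self.mp hApsd.nonneg
  have hBA : ∀ p q, (∑ r : Ω, B r p * B r q) = A p q := by
    intro p q
    have := congrFun (congrFun hB p) q
    rw [this]
    simp [Matrix.mul_apply, Matrix.conjTranspose_apply, mul_comm]
  set e : Ω ≃ Fin (Fintype.card Ω) := Fintype.equivFin Ω with he
  set F : Ω → EuclideanSpace ℝ (Fin (Fintype.card Ω)) :=
    fun p => WithLp.toLp 2 (fun i => B (e.symm i) p) with hF
  refine ⟨Real.sqrt (2 * c), Real.sqrt_nonneg _, F, ?_⟩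
  intro p q
  have hsq : Real.sqrt (2 * c) ^ 2 = 2 * c := Real.sq_sqrt (by linarith)
  have hnorm : ‖F p - F q‖ ^ 2 = ∑ r : Ω, (B r p - B r q) ^ 2 := by
    rw [EuclideanSpace.norm_eq, Real.sq_sqrt (Finset.sum_nonneg fun i _ => sq_nonneg _)]
    rw [← Equiv.sum_comp e.symm (fun r => (B r p - B r q) ^ 2)]
    refine Finset.sum_congr rfl fun i _ => ?_
    simp only [Real.norm_eq_abs, sq_abs]
    rfl
  rw [hnorm]
  have expand : (∑ r : Ω, (B r p - B r q) ^ 2)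
      = (∑ r : Ω, B r p * B r p) - 2 * (∑ r : Ω, B r p * B r q)
        + ∑ r : Ω, B r q * B r q := by
    rw [Finset.mul_sum, ← Finset.sum_sub_distrib, ← Finset.sum_add_distrib]
    refine Finset.sum_congr rfl fun r _ => ?_
    ring
  rw [expand, hBA, hBA, hBA]
  by_cases hpq : p = q
  · subst hpq
    simp [hA, hD, hdiag]
    ring
  · simp only [hA, hD, if_neg hpq, ne_eq, hpq, not_false_iff, if_true, if_pos rfl, hsq,
      hdiag, if_false]
    ring
end

section
/- (Breiman's theorem, two-cluster discrete Gini) Let P be a probability mass function on a finite set L with n = ∑_{l∈L} c_l points having feature value counts c_l > 0, and consider splitting L into two nonempty parts (L¹, L²), setting |S^k| = ∑_{l∈L^k} c_l and G(S^k) = 1 − ∑_{l∈L^k} (c_l/|S^k|)². Then the minimum over all 2-partitions of ∑_k |S^k|·G(S^k) is attained by the partition L¹ = {l*}, L² = L∖{l*}, where l* is a feature value with maximal count c_{l*}. -/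
open Finset

lemma breiman_key (m s t q r : ℝ) (hm : 0 < m) (hms : m ≤ s) (ht : 0 < t)
    (hq : m ^ 2 ≤ q) (hqs : q ≤ m * s) (hrt : r ≤ m * t) (hrt2 : r ≤ t ^ 2) :
    q / s + r / t ≤ m + (q + r - m ^ 2) / (s + t - m) := by
  have hs : 0 < s := lt_of_lt_of_le hm hms
  have hstm : 0 < s + t - m := by linarith
  rw [show m + (q + r - m ^ 2) / (s + t - m)
      = (m * (s + t - m) + (q + r - m ^ 2)) / (s + t - m) by field_simp,
    div_add_div _ _ hs.ne' ht.ne', div_le_div_iff₀ (by positivity) hstm]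
  rcases le_total t m with h | h
  · nlinarith [mul_nonneg (mul_nonneg ht.le (sub_nonneg.2 h)) (sq_nonneg (s - m)),
      mul_nonneg (mul_nonneg ht.le (sub_nonneg.2 h)) (sub_nonneg.2 hq),
      mul_nonneg (mul_nonneg hs.le (sub_nonneg.2 hms)) (sub_nonneg.2 hrt2)]
  · nlinarith [mul_nonneg (mul_nonneg ht.le (sub_nonneg.2 h)) (sub_nonneg.2 hqs),
      mul_nonneg (mul_nonneg hs.le (sub_nonneg.2 hms)) (sub_nonneg.2 hrt)]

/-- Breiman's theorem (two-cluster discrete Gini criterion): the Gini criterion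
`∑_k |S^k|·G(S^k)` over 2-partitions `(T, Tᶜ)` of a finite feature set `L` with positive
counts `c` is minimized by splitting off a single feature value of maximal count. -/
theorem breiman_gini_bias {L : Type*} [Fintype L] [DecidableEq L]
    (hcard : 2 ≤ Fintype.card L)
    (c : L → ℝ) (hc : ∀ l, 0 < c l)
    (lstar : L) (hmax : ∀ l, c l ≤ c lstar)
    (obj : Finset L → ℝ)
    (hobj : ∀ T : Finset L,
      obj T = (∑ l ∈ T, c l) * (1 - ∑ l ∈ T, (c l / ∑ l' ∈ T, c l') ^ 2) +
              (∑ l ∈ Tᶜ, c l) * (1 - ∑ l ∈ Tᶜ, (c l / ∑ l' ∈ Tᶜ, c l') ^ 2)) :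
    ∀ T : Finset L, T.Nonempty → Tᶜ.Nonempty → obj {lstar} ≤ obj T := by
  -- reduce to the case `lstar ∈ T`
  suffices H : ∀ T : Finset L, T.Nonempty → Tᶜ.Nonempty → lstar ∈ T →
      obj {lstar} ≤ obj T by
    intro T hT hTc
    by_cases h : lstar ∈ T
    · exact H T hT hTc h
    · have := H Tᶜ hTc (by simpa using hT) (mem_compl.2 h)
      calc obj {lstar} ≤ obj Tᶜ := this
        _ = obj T := by rw [hobj, hobj, compl_compl]; ring
  intro T hT hTc hmem
  have spos : ∀ U : Finset L, U.Nonempty → 0 < ∑ l ∈ U, c l :=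
    fun U hU => Finset.sum_pos (fun i _ => hc i) hU
  set m := c lstar with hm_def
  set s := ∑ l ∈ T, c l with hs_def
  set t := ∑ l ∈ Tᶜ, c l with ht_def
  set q := ∑ l ∈ T, c l ^ 2 with hq_def
  set r := ∑ l ∈ Tᶜ, c l ^ 2 with hr_def
  have hm : 0 < m := hc lstar
  have hs : 0 < s := spos T hT
  have ht : 0 < t := spos Tᶜ hTc
  have hms : m ≤ s := single_le_sum (fun i _ => (hc i).le) hmem
  have hq : m ^ 2 ≤ q := single_le_sum (f := fun l => c l ^ 2) (fun i _ => sq_nonneg _) hmem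
  have hqs : q ≤ m * s := by
    rw [hq_def, hs_def, mul_sum]
    exact sum_le_sum fun i _ => by nlinarith [hc i, hmax i]
  have hrt : r ≤ m * t := by
    rw [hr_def, ht_def, mul_sum]
    exact sum_le_sum fun i _ => by nlinarith [hc i, hmax i]
  have hrt2 : r ≤ t ^ 2 := by
    have : ∀ i ∈ Tᶜ, c i ^ 2 ≤ c i * t :=
      fun i hi => by
        have : c i ≤ t := single_le_sum (fun j _ => (hc j).le) hi
        nlinarith [hc i]
    calc r ≤ ∑ i ∈ Tᶜ, c i * t := sum_le_sum this
      _ = t ^ 2 := by rw [← sum_mul, ← ht_def]; ring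
  -- sums over the complement of the singleton
  have hsub : {lstar} ⊆ (univ : Finset L) := subset_univ _
  have hcompl_c : ∑ l ∈ ({lstar} : Finset L)ᶜ, c l = s + t - m := by
    have h1 : ∑ l ∈ ({lstar} : Finset L), c l + ∑ l ∈ ({lstar} : Finset L)ᶜ, c l
        = ∑ l, c l := sum_add_sum_compl _ _
    have h2 : s + t = ∑ l, c l := sum_add_sum_compl _ _
    simp only [sum_singleton] at h1
    linarith
  have hcompl_c2 : ∑ l ∈ ({lstar} : Finset L)ᶜ, c l ^ 2 = q + r - m ^ 2 := by
    have h1 : ∑ l ∈ ({lstar} : Finset L), c l ^ 2 + ∑ l ∈ ({lstar} : Finset L)ᶜ, c l ^ 2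
        = ∑ l, c l ^ 2 := sum_add_sum_compl _ _
    have h2 : q + r = ∑ l, c l ^ 2 := sum_add_sum_compl _ _
    simp only [sum_singleton] at h1
    linarith
  have key := breiman_key m s t q r hm hms ht hq hqs hrt hrt2
  have hstm : 0 < s + t - m := by linarith
  -- rewrite the objectives
  have sq_sum : ∀ U : Finset L, (∑ l ∈ U, (c l / ∑ l' ∈ U, c l') ^ 2)
      = (∑ l ∈ U, c l ^ 2) / (∑ l' ∈ U, c l') ^ 2 := by
    intro U
    rw [sum_div]
    exact sum_congr rfl fun i _ => by rw [div_pow]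
  rw [hobj, hobj]
  rw [sq_sum, sq_sum, sq_sum, sq_sum]
  simp only [sum_singleton, ← hs_def, ← ht_def, ← hq_def, ← hr_def, ← hm_def,
    hcompl_c, hcompl_c2]
  have e0 : m * (1 - m ^ 2 / m ^ 2) = 0 := by
    rw [div_self (by positivity)]; ring
  have e1 : s * (1 - q / s ^ 2) = s - q / s := by field_simp
  have e2 : t * (1 - r / t ^ 2) = t - r / t := by field_simp
  have e3 : (s + t - m) * (1 - (q + r - m ^ 2) / (s + t - m) ^ 2)
      = (s + t - m) - (q + r - m ^ 2) / (s + t - m) := by field_simp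
  rw [e0, e1, e2, e3]
  linarith [key]
end
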